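/- Let k ≥ 4 be a natural number, let ℓ be a natural number with 2 ≤ ℓ ≤ k − 2, and let z ∈ ℂ. Then ((k+1)/π) · ∫_ℂ (1 + z·conj(w))^(k−2) · (z + conj(w))² / (1 + |w|²)^(k+2) · w^ℓ dA(w) = (1/(k choose ℓ)) · ( (k−2 choose ℓ) · z^(ℓ+2) + 2·(k−2 choose ℓ−1) · z^ℓ + (k−2 choose ℓ−2) · z^(ℓ−2) ). -/

import Mathlib

open MeasureTheory Complex


lemma ioo_eq_interval (f : ℝ → ℝ) : ∫ u in Set.Ioo (0:ℝ) 1, f u = ∫ u in (0:ℝ)..1, f u := by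
  rw [intervalIntegral.integral_of_le zero_le_one, integral_Ioc_eq_integral_Ioo]

lemma beta_nat (a b : ℕ) :
    ∫ u in Set.Ioo (0:ℝ) 1, u ^ a * (1 - u) ^ b
      = (a.factorial * b.factorial : ℝ) / (a + b + 1).factorial := by
  have h1 : Complex.betaIntegral (a + 1) (b + 1)
      = ((∫ u in Set.Ioo (0:ℝ) 1, u ^ a * (1 - u) ^ b : ℝ) : ℂ) := by
    rw [Complex.betaIntegral, ioo_eq_interval]
    rw [show ((a : ℂ) + 1 - 1) = (a : ℂ) by ring, show ((b : ℂ) + 1 - 1) = (b : ℂ) by ring]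
    rw [← intervalIntegral.integral_ofReal]
    refine intervalIntegral.integral_congr fun x hx => ?_
    rw [Complex.cpow_natCast, Complex.cpow_natCast]
    push_cast
    ring
  have h2 : Complex.Gamma ((a:ℂ) + 1) * Complex.Gamma ((b:ℂ) + 1)
      = Complex.Gamma (((a:ℂ) + 1) + ((b:ℂ) + 1)) * Complex.betaIntegral (a+1) (b+1) :=
    Complex.Gamma_mul_Gamma_eq_betaIntegral (by simp [Complex.add_re]; positivity)
      (by simp [Complex.add_re]; positivity)
  rw [Complex.Gamma_nat_eq_factorial, Complex.Gamma_nat_eq_factorial] at h2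
  have h3 : ((a:ℂ) + 1) + ((b:ℂ) + 1) = ((a + b + 1 : ℕ) : ℂ) + 1 := by push_cast; ring
  rw [h3, Complex.Gamma_nat_eq_factorial, h1] at h2
  rw [eq_div_iff (by exact_mod_cast (a+b+1).factorial_ne_zero : ((a+b+1).factorial : ℝ) ≠ 0)]
  have h5 : ((a+b+1).factorial : ℝ) * (∫ (u : ℝ) in Set.Ioo 0 1, u ^ a * (1 - u) ^ b) = (b.factorial * a.factorial : ℕ) := by exact_mod_cast (h2.symm.trans (mul_comm _ _))
  push_cast at h5 ⊢
  linarith [h5]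

lemma sub2 (l N : ℕ) (h : l + 2 ≤ N) :
    ∫ s in Set.Ioi (0:ℝ), s ^ l / (1 + s) ^ N
      = ∫ u in Set.Ioo (0:ℝ) 1, u ^ l * (1 - u) ^ (N - l - 2) := by
  have himg : (fun u : ℝ => u / (1 - u)) '' Set.Ioo 0 1 = Set.Ioi 0 := by
    ext y
    constructor
    · rintro ⟨u, ⟨hu0, hu1⟩, rfl⟩
      have : 0 < 1 - u := by linarith
      exact div_pos hu0 this
    · intro hy
      refine ⟨y / (1 + y), ⟨?_, ?_⟩, ?_⟩
      · exact div_pos hy (by linarith [Set.mem_Ioi.1 hy])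
      · rw [div_lt_one (by linarith [Set.mem_Ioi.1 hy])]; linarith [Set.mem_Ioi.1 hy]
      · have h1y : (1:ℝ) + y ≠ 0 := by have := Set.mem_Ioi.1 hy; positivity
        field_simp
        ring
    
  rw [← himg, integral_image_eq_integral_abs_deriv_smul measurableSet_Ioo
      (f' := fun u => 1 / (1 - u) ^ 2) ?_ ?_]
  · refine setIntegral_congr_fun measurableSet_Ioo fun u hu => ?_
    obtain ⟨hu0, hu1⟩ := hu
    have h1u : (0:ℝ) < 1 - u := by linarith
    have h1u' : (1:ℝ) - u ≠ 0 := ne_of_gt h1u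
    have key : 1 + u / (1 - u) = 1 / (1 - u) := by field_simp; ring
    rw [smul_eq_mul, key, abs_of_pos (by positivity)]
    obtain ⟨b, rfl⟩ : ∃ b, N = b + l + 2 := ⟨N - l - 2, by omega⟩
    rw [show b + l + 2 - l - 2 = b by omega]
    rw [div_pow, one_div_pow]
    field_simp
    ring
  · intro u hu
    obtain ⟨hu0, hu1⟩ := hu
    have h1u : (1:ℝ) - u ≠ 0 := by intro hc; nlinarith
    have : HasDerivAt (fun u : ℝ => u / (1 - u)) (1 / (1 - u) ^ 2) u := by
      have hd : HasDerivAt (fun u : ℝ => u / (1 - u))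
          ((1 * (1 - u) - u * (-1)) / (1 - u) ^ 2) u :=
        (hasDerivAt_id u).div ((hasDerivAt_id u).const_sub 1) h1u
      convert hd using 1
      field_simp
      ring
    exact this.hasDerivWithinAt
  · intro a ha b hb hab
    obtain ⟨ha0, ha1⟩ := ha
    obtain ⟨hb0, hb1⟩ := hb
    have h1a : (1:ℝ) - a ≠ 0 := by intro hc; nlinarith
    have h1b : (1:ℝ) - b ≠ 0 := by intro hc; nlinarith
    field_simp at hab
    nlinarith [hab]

lemma radial (l N : ℕ) (h : l + 2 ≤ N) :
    ∫ r in Set.Ioi (0:ℝ), r ^ (2 * l + 1) / (1 + r ^ 2) ^ N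
      = (l.factorial * (N - l - 2).factorial : ℝ) / (2 * (N - 1).factorial) := by
  have himg : (fun r : ℝ => r ^ 2) '' Set.Ioi 0 = Set.Ioi 0 := by
    ext y
    constructor
    · rintro ⟨r, hr, rfl⟩
      have := Set.mem_Ioi.1 hr
      exact Set.mem_Ioi.2 (by positivity)
    · intro hy
      have hy' := Set.mem_Ioi.1 hy
      exact ⟨Real.sqrt y, Set.mem_Ioi.2 (Real.sqrt_pos.2 hy'), Real.sq_sqrt hy'.le⟩
  have key : ∫ s in Set.Ioi (0:ℝ), s ^ l / (1 + s) ^ N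
      = 2 * ∫ r in Set.Ioi (0:ℝ), r ^ (2 * l + 1) / (1 + r ^ 2) ^ N := by
    conv_lhs => rw [← himg]
    rw [integral_image_eq_integral_abs_deriv_smul measurableSet_Ioi
        (f' := fun r => 2 * r) (fun r _ => by
          simpa using (hasDerivAt_pow 2 r).hasDerivWithinAt)
        (fun a ha b hb hab => by
          have ha' := Set.mem_Ioi.1 ha
          have hb' := Set.mem_Ioi.1 hb
          nlinarith)]
    rw [← integral_const_mul]
    refine setIntegral_congr_fun measurableSet_Ioi fun r hr => ?_
    have hr' := Set.mem_Ioi.1 hr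
    rw [smul_eq_mul, abs_of_pos (by positivity)]
    rw [pow_add, pow_mul]
    ring
  have hb : l + (N - l - 2) + 1 = N - 1 := by omega
  rw [sub2 l N h, beta_nat l (N - l - 2), hb] at key
  have hc : (0:ℝ) < (N - 1).factorial := by exact_mod_cast (N - 1).factorial_pos
  have h2 := (div_eq_iff hc.ne').1 key
  rw [eq_div_iff (by positivity)]
  linarith [h2]

lemma angular_zero :
    ∫ _ in Set.Ioo (-Real.pi) Real.pi, (1:ℂ) = ((2 * Real.pi : ℝ) : ℂ) := by
  simp only [integral_const, smul_eq_mul, mul_one, Measure.restrict_apply MeasurableSet.univ,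
    Set.univ_inter, Real.volume_Ioo]
  rw [measureReal_restrict_apply_univ, Real.volume_real_Ioo, max_eq_left (by linarith [Real.pi_pos])]
  simp [Complex.real_smul]
  push_cast
  ring

lemma angular_ne (n : ℤ) (hn : n ≠ 0) :
    ∫ θ in Set.Ioo (-Real.pi) Real.pi, Complex.exp ((n:ℂ) * θ * Complex.I) = 0 := by
  have hle : -Real.pi ≤ Real.pi := by linarith [Real.pi_pos]
  rw [← integral_Ioc_eq_integral_Ioo, ← intervalIntegral.integral_of_le hle]
  have hc : ((n:ℂ) * Complex.I) ≠ 0 := by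
    simp [Complex.I_ne_zero, hn]
  calc ∫ θ in (-Real.pi)..Real.pi, Complex.exp ((n:ℂ) * θ * Complex.I)
      = ∫ θ in (-Real.pi)..Real.pi, Complex.exp (((n:ℂ) * Complex.I) * θ) := by
        refine intervalIntegral.integral_congr fun x _ => ?_
        ring_nf
    _ = (Complex.exp (((n:ℂ) * Complex.I) * Real.pi)
          - Complex.exp (((n:ℂ) * Complex.I) * (-Real.pi))) / ((n:ℂ) * Complex.I) := by
        rw [integral_exp_mul_complex hc]
        push_cast
        ring_nf
    _ = 0 := by
        rw [show ((n:ℂ) * Complex.I) * Real.pi = n * ((Real.pi : ℂ) * Complex.I) by push_cast; ring,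
          show ((n:ℂ) * Complex.I) * (-Real.pi) = n * (-((Real.pi : ℂ) * Complex.I)) by
            push_cast; ring,
          Complex.exp_int_mul, Complex.exp_int_mul, Complex.exp_neg, Complex.exp_pi_mul_I]
        norm_num

lemma mom (m l N : ℕ) (hlN : l + 2 ≤ N) :
    ∫ w : ℂ, (starRingEnd ℂ w) ^ m * w ^ l / ((1 + ‖w‖ ^ 2 : ℝ) : ℂ) ^ N
      = if m = l then
          (Real.pi : ℂ) * l.factorial * (N - l - 2).factorial / (N - 1).factorial
        else 0 := by
  have step1 :
      ∫ w : ℂ, (starRingEnd ℂ w) ^ m * w ^ l / ((1 + ‖w‖ ^ 2 : ℝ) : ℂ) ^ N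
        = (∫ r in Set.Ioi (0:ℝ), ((r ^ (m + l + 1) / (1 + r ^ 2) ^ N : ℝ) : ℂ))
          * ∫ θ in Set.Ioo (-Real.pi) Real.pi,
              Complex.exp ((((l : ℤ) - (m : ℤ) : ℤ) : ℂ) * θ * Complex.I) := by
    rw [← Complex.integral_comp_polarCoord_symm, polarCoord_target]
    rw [Measure.volume_eq_prod, ← setIntegral_prod_mul]
    refine setIntegral_congr_fun (measurableSet_Ioi.prod measurableSet_Ioo) fun p hp => ?_
    obtain ⟨hr, hθ⟩ := hp
    have hr' : (0:ℝ) < p.1 := hr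
    have hsymm : Complex.polarCoord.symm p = (p.1 : ℂ) * Complex.exp (p.2 * Complex.I) := by
      rw [Complex.polarCoord_symm_apply, Complex.exp_mul_I]
      push_cast
      ring
    have habs : ‖Complex.polarCoord.symm p‖ = p.1 := by
      rw [Complex.norm_polarCoord_symm, abs_of_pos hr']
    have hconj : (starRingEnd ℂ) (Complex.polarCoord.symm p)
        = (p.1 : ℂ) * Complex.exp (-(p.2 * Complex.I)) := by
      rw [hsymm, map_mul, Complex.conj_ofReal, ← Complex.exp_conj, map_mul, Complex.conj_ofReal,
        Complex.conj_I, mul_neg]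
    have he : Complex.exp (-(p.2 * Complex.I)) ^ m * Complex.exp (p.2 * Complex.I) ^ l
        = Complex.exp ((((l : ℤ) - (m : ℤ) : ℤ) : ℂ) * p.2 * Complex.I) := by
      rw [← Complex.exp_nat_mul, ← Complex.exp_nat_mul, ← Complex.exp_add]
      congr 1
      push_cast
      ring
    have hden : ((1 + p.1 ^ 2 : ℝ) : ℂ) ^ N ≠ 0 := by
      apply pow_ne_zero
      exact_mod_cast (by positivity : (1 + p.1 ^ 2 : ℝ) ≠ 0)
    rw [habs, hconj, hsymm, Complex.real_smul]
    rw [mul_pow, mul_pow]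
    push_cast
    rw [show ((l:ℂ) - (m:ℂ)) * (p.2:ℂ) * Complex.I
        = (((l : ℤ) - (m : ℤ) : ℤ) : ℂ) * (p.2:ℂ) * Complex.I by push_cast; ring, ← he]
    field_simp
    ring
  by_cases hml : m = l
  · subst hml
    rw [step1, if_pos rfl]
    have hang : ∫ θ in Set.Ioo (-Real.pi) Real.pi,
        Complex.exp ((((m : ℤ) - (m : ℤ) : ℤ) : ℂ) * θ * Complex.I)
          = ((2 * Real.pi : ℝ) : ℂ) := by
      rw [← angular_zero]
      refine setIntegral_congr_fun measurableSet_Ioo fun θ _ => ?_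
      simp
    have hre : (∫ r in Set.Ioi (0:ℝ), ((r ^ (m + m + 1) / (1 + r ^ 2) ^ N : ℝ) : ℂ))
        = ((∫ r in Set.Ioi (0:ℝ), r ^ (2 * m + 1) / (1 + r ^ 2) ^ N : ℝ) : ℂ) := by
      rw [show m + m + 1 = 2 * m + 1 by ring]
      exact integral_ofReal
    rw [hang, hre, radial m N hlN]
    have hfac : ((N - 1).factorial : ℂ) ≠ 0 := by exact_mod_cast (N - 1).factorial_ne_zero
    push_cast
    field_simp
  · rw [step1, if_neg hml]
    rw [angular_ne ((l : ℤ) - (m : ℤ)) (sub_ne_zero.mpr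
      (by exact_mod_cast (show l ≠ m from fun h => hml h.symm))), mul_zero]

lemma integrable_mom (m l N : ℕ) (h : m + l + 2 < 2 * N) :
    Integrable (fun w : ℂ =>
      (starRingEnd ℂ w) ^ m * w ^ l / ((1 + ‖w‖ ^ 2 : ℝ) : ℂ) ^ N) := by
  have hr : (Module.finrank ℝ ℂ : ℝ) < ((2 * N - m - l : ℕ) : ℝ) := by
    rw [Complex.finrank_real_complex]
    exact_mod_cast (by omega : 2 < 2 * N - m - l)
  refine ((integrable_one_add_norm (E := ℂ) hr).const_mul ((2:ℝ) ^ N)).mono' ?_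
    (Filter.Eventually.of_forall fun w => ?_)
  · apply Continuous.aestronglyMeasurable
    apply Continuous.div
    · exact (Complex.continuous_conj.pow m).mul (continuous_pow l)
    · exact (Complex.continuous_ofReal.comp
        (continuous_const.add (continuous_norm.pow 2))).pow N
    · intro w
      apply pow_ne_zero
      exact_mod_cast (by positivity : (1 + ‖w‖ ^ 2 : ℝ) ≠ 0)
  · set t : ℝ := ‖w‖ with ht
    have ht0 : 0 ≤ t := norm_nonneg w
    have hnorm : ‖(starRingEnd ℂ w) ^ m * w ^ l / ((1 + ‖w‖ ^ 2 : ℝ) : ℂ) ^ N‖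
        = t ^ (m + l) / (1 + t ^ 2) ^ N := by
      rw [norm_div, norm_mul, norm_pow, norm_pow, norm_pow, RCLike.norm_conj,
        Complex.norm_real, Real.norm_of_nonneg (by positivity : (0:ℝ) ≤ 1 + ‖w‖ ^ 2)]
      rw [pow_add]
    rw [hnorm]
    have hpow : (1 + t) ^ (-((2 * N - m - l : ℕ) : ℝ))
        = ((1 + t) ^ (2 * N - m - l : ℕ))⁻¹ := by
      rw [Real.rpow_neg (by positivity), Real.rpow_natCast]
    rw [hpow, ← div_eq_mul_inv]
    rw [div_le_div_iff₀ (by positivity) (by positivity)]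
    calc t ^ (m + l) * (1 + t) ^ (2 * N - m - l)
        ≤ (1 + t) ^ (m + l) * (1 + t) ^ (2 * N - m - l) := by gcongr; linarith
      _ = ((1 + t) ^ 2) ^ N := by rw [← pow_add, ← pow_mul]; congr 1; omega
      _ ≤ (2 * (1 + t ^ 2)) ^ N := by gcongr <;> nlinarith [sq_nonneg (1 - t), sq_nonneg t]
      _ = 2 ^ N * (1 + t ^ 2) ^ N := by rw [mul_pow]


/-- Monomial form of the computation of `T_k^{cov}(x₁²)` (Section 8 of the paper):
the covariant Berezin–Toeplitz operator of `x₁²` on `S² ≅ ℂP¹` acts on the monomial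
`w^ℓ` (for `2 ≤ ℓ ≤ k-2`) by the stated combination of `z^(ℓ+2)`, `z^ℓ`, `z^(ℓ-2)`. -/
theorem stmt_6 (k : ℕ) (hk : 4 ≤ k) (ℓ : ℕ) (hℓ₁ : 2 ≤ ℓ) (hℓ₂ : ℓ ≤ k - 2) (z : ℂ) :
    ((k : ℂ) + 1) / (Real.pi : ℂ) *
        ∫ w : ℂ, (1 + z * starRingEnd ℂ w) ^ (k - 2) * (z + starRingEnd ℂ w) ^ 2 /
            ((1 + ‖w‖ ^ 2 : ℝ) : ℂ) ^ (k + 2) * w ^ ℓ =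
      1 / (k.choose ℓ : ℂ) *
        (((k - 2).choose ℓ : ℂ) * z ^ (ℓ + 2) + 2 * ((k - 2).choose (ℓ - 1) : ℂ) * z ^ ℓ +
          ((k - 2).choose (ℓ - 2) : ℂ) * z ^ (ℓ - 2)) := by
  have hℓk : ℓ ≤ k := by omega
  have hpt : ∀ w : ℂ, (1 + z * starRingEnd ℂ w) ^ (k - 2) * (z + starRingEnd ℂ w) ^ 2 /
        ((1 + ‖w‖ ^ 2 : ℝ) : ℂ) ^ (k + 2) * w ^ ℓ
      = ∑ j ∈ Finset.range (k - 2 + 1), ∑ i ∈ Finset.range (2 + 1),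
          (((k - 2).choose j : ℂ) * (Nat.choose 2 i : ℂ) * z ^ (j + i)) *
            ((starRingEnd ℂ w) ^ (j + (2 - i)) * w ^ ℓ /
              ((1 + ‖w‖ ^ 2 : ℝ) : ℂ) ^ (k + 2)) := by
    intro w
    rw [add_comm (1 : ℂ) (z * starRingEnd ℂ w), add_pow, add_pow, Finset.sum_mul_sum]
    rw [Finset.sum_div, Finset.sum_mul]
    refine Finset.sum_congr rfl fun j hj => ?_
    rw [Finset.sum_div, Finset.sum_mul]
    refine Finset.sum_congr rfl fun i hi => ?_
    rw [mul_pow, pow_add z j i]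
    ring
  have hint : ∀ j ∈ Finset.range (k - 2 + 1), ∀ i ∈ Finset.range (2 + 1),
      Integrable (fun w : ℂ =>
        (((k - 2).choose j : ℂ) * (Nat.choose 2 i : ℂ) * z ^ (j + i)) *
          ((starRingEnd ℂ w) ^ (j + (2 - i)) * w ^ ℓ /
            ((1 + ‖w‖ ^ 2 : ℝ) : ℂ) ^ (k + 2))) := by
    intro j hj i hi
    simp only [Finset.mem_range] at hj hi
    exact (integrable_mom (j + (2 - i)) ℓ (k + 2) (by omega)).const_mul _
  have hmain : (∫ w : ℂ, (1 + z * starRingEnd ℂ w) ^ (k - 2) * (z + starRingEnd ℂ w) ^ 2 /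
        ((1 + ‖w‖ ^ 2 : ℝ) : ℂ) ^ (k + 2) * w ^ ℓ)
      = ∑ j ∈ Finset.range (k - 2 + 1), ∑ i ∈ Finset.range (2 + 1),
          (((k - 2).choose j : ℂ) * (Nat.choose 2 i : ℂ) * z ^ (j + i)) *
            (if j + (2 - i) = ℓ then
              (Real.pi : ℂ) * ℓ.factorial * ((k + 2) - ℓ - 2).factorial /
                ((k + 2) - 1).factorial
            else 0) := by
    simp only [hpt]
    rw [integral_finset_sum _ (fun j hj => integrable_finset_sum _ (hint j hj))]
    refine Finset.sum_congr rfl fun j hj => ?_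
    rw [integral_finset_sum _ (hint j hj)]
    refine Finset.sum_congr rfl fun i hi => ?_
    rw [integral_const_mul, mom (j + (2 - i)) ℓ (k + 2) (by omega)]
  rw [hmain, show (k + 2) - ℓ - 2 = k - ℓ by omega, show (k + 2) - 1 = k + 1 from rfl]
  set V : ℂ := (Real.pi : ℂ) * ℓ.factorial * (k - ℓ).factorial / (k + 1).factorial with hV
  have hsum : ∑ j ∈ Finset.range (k - 2 + 1), ∑ i ∈ Finset.range (2 + 1),
        (((k - 2).choose j : ℂ) * (Nat.choose 2 i : ℂ) * z ^ (j + i)) *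
          (if j + (2 - i) = ℓ then V else 0)
      = (((k - 2).choose (ℓ - 2) : ℂ) * z ^ (ℓ - 2) +
          2 * ((k - 2).choose (ℓ - 1) : ℂ) * z ^ ℓ +
          ((k - 2).choose ℓ : ℂ) * z ^ (ℓ + 2)) * V := by
    rw [Finset.sum_comm, Finset.sum_range_succ, Finset.sum_range_succ, Finset.sum_range_succ,
      Finset.sum_range_zero]
    rw [Finset.sum_eq_single (ℓ - 2)
      (fun b _ hbne => by rw [if_neg (by omega), mul_zero])
      (fun hnot => absurd (Finset.mem_range.mpr (by omega)) hnot)]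
    rw [Finset.sum_eq_single (ℓ - 1)
      (fun b _ hbne => by rw [if_neg (by omega), mul_zero])
      (fun hnot => absurd (Finset.mem_range.mpr (by omega)) hnot)]
    rw [Finset.sum_eq_single ℓ
      (fun b _ hbne => by rw [if_neg (by omega), mul_zero])
      (fun hnot => absurd (Finset.mem_range.mpr (by omega)) hnot)]
    rw [if_pos (by omega), if_pos (by omega), if_pos (by omega)]
    rw [show (ℓ - 2) + 0 = ℓ - 2 by omega, show (ℓ - 1) + 1 = ℓ by omega]
    norm_num [Nat.choose]
    ring
  rw [hsum]
  have hc0 : (k.choose ℓ : ℂ) ≠ 0 := by exact_mod_cast (Nat.choose_pos hℓk).ne'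
  have hπ : (Real.pi : ℂ) ≠ 0 := by exact_mod_cast Real.pi_ne_zero
  have hf1 : ((k + 1).factorial : ℂ) ≠ 0 := by exact_mod_cast (k + 1).factorial_ne_zero
  have hk1 : ((k + 1).factorial : ℂ) = ((k : ℂ) + 1) * (k.factorial : ℂ) := by
    rw [Nat.factorial_succ]; push_cast; ring
  have hcf : (k.choose ℓ : ℂ) * ℓ.factorial * (k - ℓ).factorial = k.factorial := by
    exact_mod_cast Nat.choose_mul_factorial_mul_factorial hℓk
  have hk0 : ((k : ℂ) + 1) * (k.choose ℓ : ℂ) ≠ 0 := by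
    refine mul_ne_zero ?_ hc0
    have : ((k : ℂ) + 1) = ((k + 1 : ℕ) : ℂ) := by push_cast; ring
    rw [this]
    exact_mod_cast Nat.succ_ne_zero k
  have hV2 : V = (Real.pi : ℂ) / (((k : ℂ) + 1) * (k.choose ℓ : ℂ)) := by
    rw [hV, div_eq_div_iff hf1 hk0, hk1]
    linear_combination (Real.pi : ℂ) * ((k : ℂ) + 1) * hcf
  have hscal : ((k : ℂ) + 1) / (Real.pi : ℂ) * V = 1 / (k.choose ℓ : ℂ) := by
    rw [hV2]
    field_simp
  calc ((k : ℂ) + 1) / (Real.pi : ℂ) *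
        ((((k - 2).choose (ℓ - 2) : ℂ) * z ^ (ℓ - 2) +
          2 * ((k - 2).choose (ℓ - 1) : ℂ) * z ^ ℓ +
          ((k - 2).choose ℓ : ℂ) * z ^ (ℓ + 2)) * V)
      = (((k : ℂ) + 1) / (Real.pi : ℂ) * V) *
          (((k - 2).choose (ℓ - 2) : ℂ) * z ^ (ℓ - 2) +
            2 * ((k - 2).choose (ℓ - 1) : ℂ) * z ^ ℓ +
            ((k - 2).choose ℓ : ℂ) * z ^ (ℓ + 2)) := by ring
    _ = _ := by rw [hscal]; ring
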